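/- Let m ≥ α > 0 and Δ ≥ δ be real numbers, let t ∈ ℝ and τ ≥ 0, and let φ : [t, t+τ] → ℝ be differentiable with φ(t) ≤ Δ and φ'(s) ≤ m·(Δ − φ(s)) − α·e^{−(m−α)(s−t)}·(Δ − δ) for all s ∈ [t, t+τ]. Then φ(t+τ) ≤ Δ − e^{−(m−α)τ}·(1 − e^{−ατ})·(Δ − δ). -/

import Mathlib

/-- Integration step of Lemma 4 (case k ≥ 1): a differentiable function `φ` with
`φ t ≤ Δ` and derivative bound
`φ' s ≤ m (Δ - φ s) - α e^{-(m-α)(s-t)} (Δ - δ)` on `[t, t+τ]` satisfies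
`φ (t+τ) ≤ Δ - e^{-(m-α)τ} (1 - e^{-ατ}) (Δ - δ)`. -/
theorem stmt16 (m α Δ δ t τ : ℝ) (hα : 0 < α) (hm : α ≤ m) (hδ : δ ≤ Δ) (hτ : 0 ≤ τ)
    (φ φ' : ℝ → ℝ)
    (hd : ∀ s ∈ Set.Icc t (t + τ), HasDerivAt φ (φ' s) s)
    (hφt : φ t ≤ Δ)
    (hb : ∀ s ∈ Set.Icc t (t + τ),
      φ' s ≤ m * (Δ - φ s) - α * Real.exp (-(m - α) * (s - t)) * (Δ - δ)) :
    φ (t + τ) ≤ Δ - Real.exp (-(m - α) * τ) * (1 - Real.exp (-α * τ)) * (Δ - δ) := by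
  set C := Δ - δ with hC
  have hC0 : 0 ≤ C := by linarith
  set F : ℝ → ℝ := fun s => Real.exp (m * (s - t)) * (Δ - φ s) - C * Real.exp (α * (s - t))
  set F' : ℝ → ℝ := fun s =>
    (m * Real.exp (m * (s - t)) * (Δ - φ s) - Real.exp (m * (s - t)) * φ' s)
      - C * (α * Real.exp (α * (s - t)))
  have hFd : ∀ s ∈ Set.Icc t (t + τ), HasDerivAt F (F' s) s := by
    intro s hs
    have h1 : HasDerivAt (fun s => Real.exp (m * (s - t))) (m * Real.exp (m * (s - t))) s := by
      have : HasDerivAt (fun s => m * (s - t)) m s := by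
        simpa using ((hasDerivAt_id s).sub_const t).const_mul m
      simpa [mul_comm] using this.exp
    have h2 : HasDerivAt (fun s => Real.exp (α * (s - t))) (α * Real.exp (α * (s - t))) s := by
      have : HasDerivAt (fun s => α * (s - t)) α s := by
        simpa using ((hasDerivAt_id s).sub_const t).const_mul α
      simpa [mul_comm] using this.exp
    have h3 : HasDerivAt (fun s => Δ - φ s) (-φ' s) s := (hd s hs).const_sub Δ
    have := (h1.mul h3).sub (h2.const_mul C)
    refine this.congr_deriv ?_
    simp [F']
    ring
  have hF'0 : ∀ s ∈ Set.Icc t (t + τ), 0 ≤ F' s := by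
    intro s hs
    have hbs := hb s hs
    have key : α * Real.exp (-(m - α) * (s - t)) * C ≤ m * (Δ - φ s) - φ' s := by linarith
    have hpos : 0 < Real.exp (m * (s - t)) := Real.exp_pos _
    have := mul_le_mul_of_nonneg_left key hpos.le
    have e1 : Real.exp (m * (s - t)) * Real.exp (-(m - α) * (s - t))
        = Real.exp (α * (s - t)) := by
      rw [← Real.exp_add]; ring_nf
    have hid : Real.exp (m * (s - t)) * (α * Real.exp (-(m - α) * (s - t)) * C)
        = C * (α * Real.exp (α * (s - t))) := by linear_combination α * C * e1
    simp only [F']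
    nlinarith [this, hid]
  have hmono : MonotoneOn F (Set.Icc t (t + τ)) := by
    apply monotoneOn_of_hasDerivWithinAt_nonneg (convex_Icc t (t + τ))
    · exact fun s hs => ((hFd s hs).continuousAt).continuousWithinAt
    · intro s hs
      exact (hFd s (interior_subset hs)).hasDerivWithinAt
    · intro s hs
      exact hF'0 s (interior_subset hs)
  have ht : t ∈ Set.Icc t (t + τ) := by constructor <;> linarith
  have htτ : t + τ ∈ Set.Icc t (t + τ) := by constructor <;> linarith
  have hFle : F t ≤ F (t + τ) := hmono ht htτ (by linarith)
  have hFt : -C ≤ F t := by simp [F]; linarith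
  have hfinal : -C ≤ Real.exp (m * τ) * (Δ - φ (t + τ)) - C * Real.exp (α * τ) := by
    have : F (t + τ) = Real.exp (m * τ) * (Δ - φ (t + τ)) - C * Real.exp (α * τ) := by
      simp [F]
    linarith [hFle.trans_eq' rfl, hFt]
  -- deduce the goal
  have eA : Real.exp (-(m - α) * τ) = Real.exp (-(m * τ)) * Real.exp (α * τ) := by
    rw [← Real.exp_add]; ring_nf
  have eB : Real.exp (-(m - α) * τ) * Real.exp (-α * τ) = Real.exp (-(m * τ)) := by
    rw [← Real.exp_add]; ring_nf
  have hmul : Real.exp (-(m - α) * τ) * (1 - Real.exp (-α * τ)) * C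
      = Real.exp (-(m * τ)) * (C * Real.exp (α * τ) - C) := by
    linear_combination C * eA - C * eB
  have hexp : 0 < Real.exp (-(m * τ)) := Real.exp_pos _
  have h2 : Real.exp (-(m * τ)) * (C * Real.exp (α * τ) - C)
      ≤ Real.exp (-(m * τ)) * (Real.exp (m * τ) * (Δ - φ (t + τ))) := by
    apply mul_le_mul_of_nonneg_left _ hexp.le
    linarith
  have eC : Real.exp (-(m * τ)) * Real.exp (m * τ) = 1 := by
    rw [← Real.exp_add]; simp
  rw [← mul_assoc, eC, one_mul] at h2
  linarith [hmul, h2]
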